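/- Let S_r be the right unilateral shift on ℓ²(ℕ) (the isometry determined by S_r e_n = e_{n+1} on the standard orthonormal basis {e_n}_{n∈ℕ}), and let S_r* be its adjoint (the left shift). Then the family of powers {(S_r*)^n}_{n∈ℕ}, viewed as maps from the closed unit ball of ℓ²(ℕ) to itself, is NOT UEC for the weak uniformity. -/

import Mathlib

open scoped InnerProductSpace ENNReal

/-- A family of maps `F k : H → H` (viewed as maps of the closed unit ball `H₁` to itself)
is *uniformly equicontinuous (UEC) for the weak uniformity* if for every `ε > 0` and all
vectors `x₁, …, x_N ∈ H₁` there exist `δ > 0` and vectors `w₁, …, w_M ∈ H₁` such that for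
all `ξ, η ∈ H₁` with `|⟪ξ - η, w_j⟫| < δ` for all `j`, and every member of the family,
`|⟪F k ξ - F k η, x_i⟫| < ε` for all `i`. -/
def UECweak {H : Type*} [NormedAddCommGroup H] [InnerProductSpace ℂ H]
    {ι : Type*} (F : ι → H → H) : Prop :=
  ∀ ε : ℝ, 0 < ε → ∀ (N : ℕ) (x : Fin N → H), (∀ i, ‖x i‖ ≤ 1) →
    ∃ (δ : ℝ) (M : ℕ) (w : Fin M → H), 0 < δ ∧ (∀ j, ‖w j‖ ≤ 1) ∧
      ∀ ξ η : H, ‖ξ‖ ≤ 1 → ‖η‖ ≤ 1 →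
        (∀ j, ‖⟪ξ - η, w j⟫_ℂ‖ < δ) →
        ∀ (k : ι) (i : Fin N), ‖⟪F k ξ - F k η, x i⟫_ℂ‖ < ε

private lemma coord_eq_inner (f : lp (fun _ : ℕ => ℂ) 2) (m : ℕ) :
    (f : ∀ _ : ℕ, ℂ) m = ⟪lp.single 2 m (1:ℂ), f⟫_ℂ := by
  rw [lp.inner_single_left]; simp

private lemma adj_single (S : (lp (fun _ : ℕ => ℂ) 2) →L[ℂ] (lp (fun _ : ℕ => ℂ) 2))
    (hS : ∀ n : ℕ, S (lp.single 2 n 1) = lp.single 2 (n + 1) 1) (n : ℕ) :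
    (ContinuousLinearMap.adjoint S) (lp.single 2 (n+1) (1:ℂ)) = lp.single 2 n 1 := by
  apply lp.ext
  funext m
  rw [coord_eq_inner, ContinuousLinearMap.adjoint_inner_right, hS, lp.inner_single_left]
  by_cases h : m = n
  · subst h; simp [lp.single_apply]
  · simp [lp.single_apply, h, fun h' => h (Nat.succ_injective h')]

private lemma adj_pow_single (S : (lp (fun _ : ℕ => ℂ) 2) →L[ℂ] (lp (fun _ : ℕ => ℂ) 2))
    (hS : ∀ n : ℕ, S (lp.single 2 n 1) = lp.single 2 (n + 1) 1) (k : ℕ) :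
    ((ContinuousLinearMap.adjoint S) ^ k) (lp.single 2 k (1:ℂ)) = lp.single 2 0 1 := by
  induction k with
  | zero => simp
  | succ k ih =>
      rw [pow_succ]
      have : ((ContinuousLinearMap.adjoint S) ^ k * ContinuousLinearMap.adjoint S)
          (lp.single 2 (k+1) (1:ℂ))
          = ((ContinuousLinearMap.adjoint S) ^ k)
            ((ContinuousLinearMap.adjoint S) (lp.single 2 (k+1) (1:ℂ))) := rfl
      rw [this, adj_single S hS, ih]

/-- Let `S_r` be the right unilateral shift on `ℓ²(ℕ)`, the isometry determined by
`S_r e_n = e_{n+1}` on the standard orthonormal basis, and let `S_r*` be its adjoint (the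
left shift).  Then the family of powers `{(S_r*)^n}_{n ∈ ℕ}`, viewed as maps of the closed
unit ball of `ℓ²(ℕ)` to itself, is not UEC for the weak uniformity. -/
theorem not_uecWeak_leftShift_powers
    (S : (lp (fun _ : ℕ => ℂ) 2) →L[ℂ] (lp (fun _ : ℕ => ℂ) 2))
    (hiso : ∀ x : lp (fun _ : ℕ => ℂ) 2, ‖S x‖ = ‖x‖)
    (hS : ∀ n : ℕ, S (lp.single 2 n 1) = lp.single 2 (n + 1) 1) :
    ¬ UECweak (fun n : ℕ => fun x : lp (fun _ : ℕ => ℂ) 2 =>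
        ((ContinuousLinearMap.adjoint S) ^ n) x) := by
  intro h
  have hnorm : ∀ k : ℕ, ‖(lp.single 2 k (1:ℂ) : lp (fun _ : ℕ => ℂ) 2)‖ ≤ 1 := by
    intro k
    have := lp.norm_single (p := 2) (E := fun _ : ℕ => ℂ) (by norm_num) k (1:ℂ)
    simp at this ⊢
  obtain ⟨δ, M, w, hδ, hw, hmain⟩ :=
    h 1 one_pos 1 (fun _ => lp.single 2 0 (1:ℂ)) (fun _ => hnorm 0)
  -- coordinates of each w j tend to 0
  have hev : ∀ᶠ k in Filter.atTop, ∀ j, ‖(w j : ∀ _ : ℕ, ℂ) k‖ < δ := by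
    rw [Filter.eventually_all]
    intro j
    have hsum : Summable (fun i => ‖(w j : ∀ _ : ℕ, ℂ) i‖ ^ (2:ℝ≥0∞).toReal) :=
      (lp.memℓp (w j)).summable (by norm_num)
    have h0 : Filter.Tendsto (fun i => ‖(w j : ∀ _ : ℕ, ℂ) i‖ ^ (2:ℝ≥0∞).toReal)
        Filter.atTop (nhds 0) := hsum.tendsto_atTop_zero
    have h1 : ∀ᶠ k in Filter.atTop,
        ‖(w j : ∀ _ : ℕ, ℂ) k‖ ^ (2:ℝ≥0∞).toReal < δ ^ 2 :=
      h0.eventually_lt_const (by positivity)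
    filter_upwards [h1] with k hk
    have : ‖(w j : ∀ _ : ℕ, ℂ) k‖ ^ 2 < δ ^ 2 := by
      have : (2:ℝ≥0∞).toReal = 2 := by norm_num
      rw [this] at hk
      exact_mod_cast hk
    exact lt_of_pow_lt_pow_left₀ 2 hδ.le this
  obtain ⟨k, hk⟩ := hev.exists
  have hclose : ∀ j, ‖⟪lp.single 2 k (1:ℂ) - 0, w j⟫_ℂ‖ < δ := by
    intro j
    rw [sub_zero, lp.inner_single_left]
    simpa using hk j
  have := hmain (lp.single 2 k (1:ℂ)) 0 (hnorm k) (by simp) hclose k 0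
  simp only [map_zero, sub_zero] at this
  rw [adj_pow_single S hS, lp.inner_single_left] at this
  simp [lp.single_apply] at this
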